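/- Let n ≥ 2 be an integer and γ ∈ (0, 1/2]. With 𝔷_1, 𝔷_2, 𝔷_3, 𝔷_4 defined piecewise as: 𝔷_1 = 2+2γ+1/(2γ), 𝔷_2 = (1+γ)²/(2γ), 𝔷_3 = 1/(2γ), 𝔷_4 = 0 for 0 < γ ≤ 1/(n+1), and 𝔷_1 = (1−n)(1+2γ)²/(2(1−2nγ)), 𝔷_2 = (n−2γ)²/(2(1−n)(1−2nγ)), 𝔷_3 = (1−n)/(2(1−2nγ)), 𝔷_4 = 1 + (1−2γ)/(1−2nγ) for 1/(n+1) ≤ γ ≤ 1/2, the characteristic polynomial of the upper-left (n+1)×(n+1) block B of the dual matrix 𝒵 satisfies det(x·I_{n+1} − B) = x^{n+1} − Λ_n(γ)·x^n, where Λ_n(γ) = ((n+1)(1+2γ) + (n+3)γ²)/(2γ) for 0 < γ ≤ 1/(n+1) and Λ_n(γ) = (n² + 2(n−1) − 4γ + 4nγ²)/(2(−1+2nγ)) for 1/(n+1) ≤ γ ≤ 1/2. In particular, the only nonzero eigenvalue of B is Λ_n(γ). -/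

import Mathlib

open Polynomial

/-- The upper-left `(n+1) × (n+1)` block `B` of the dual matrix `𝒵` built from
`𝔷_1, 𝔷_2, 𝔷_3, 𝔷_4`:
`[[𝔷_1, √(𝔷_1𝔷_2) j_{n-1}ᵀ, -1-𝔷_3+𝔷_4/2],
  [√(𝔷_1𝔷_2) j_{n-1}, 𝔷_2 J_{n-1}, (-1/2-𝔷_3+𝔷_4/2) j_{n-1}],
  [-1-𝔷_3+𝔷_4/2, (-1/2-𝔷_3+𝔷_4/2) j_{n-1}ᵀ, 𝔷_3]]`. -/
noncomputable def Bmat (n : ℕ) (z1 z2 z3 z4 : ℝ) :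
    Matrix (Fin (n + 1)) (Fin (n + 1)) ℝ :=
  Matrix.of fun p q =>
    if p.val = 0 ∧ q.val = 0 then z1
    else if (p.val = 0 ∧ 1 ≤ q.val ∧ q.val ≤ n - 1) ∨
        (1 ≤ p.val ∧ p.val ≤ n - 1 ∧ q.val = 0) then Real.sqrt (z1 * z2)
    else if (p.val = 0 ∧ q.val = n) ∨ (p.val = n ∧ q.val = 0) then -1 - z3 + z4 / 2
    else if 1 ≤ p.val ∧ p.val ≤ n - 1 ∧ 1 ≤ q.val ∧ q.val ≤ n - 1 then z2
    else if (1 ≤ p.val ∧ p.val ≤ n - 1 ∧ q.val = n) ∨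
        (p.val = n ∧ 1 ≤ q.val ∧ q.val ≤ n - 1) then -1 / 2 - z3 + z4 / 2
    else if p.val = n ∧ q.val = n then z3
    else 0

open Matrix in
private lemma eval_charpoly' {m : Type*} [Fintype m] [DecidableEq m]
    (M : Matrix m m ℝ) (x : ℝ) :
    (M.charpoly).eval x = (x • (1 : Matrix m m ℝ) - M).det := by
  rw [Matrix.charpoly, ← coe_evalRingHom, RingHom.map_det]
  congr 1
  ext i j
  by_cases h : i = j <;>
    simp [h, charmatrix_apply_eq, charmatrix_apply_ne, Matrix.one_apply, Matrix.smul_apply]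

open Matrix in
private lemma rank_one_charpoly (m : ℕ) (u : Fin (m + 1) → ℝ) :
    (Matrix.vecMulVec u u).charpoly = X ^ (m + 1) - C (∑ i, u i * u i) * X ^ m := by
  apply Polynomial.eq_of_infinite_eval_eq
  apply Set.Infinite.mono (s := {x : ℝ | x ≠ 0})
  · intro x hx
    have hx : x ≠ 0 := hx
    simp only [Set.mem_setOf_eq, eval_charpoly', eval_sub, eval_pow, eval_mul, eval_C, eval_X]
    have key : x • (1 : Matrix (Fin (m+1)) (Fin (m+1)) ℝ) - vecMulVec u u
        = x • ((1 : Matrix (Fin (m+1)) (Fin (m+1)) ℝ) + replicateCol Unit (-(x⁻¹ • u)) * replicateRow Unit u) := by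
      rw [← vecMulVec_eq]
      rw [smul_add]
      congr 1
      ext i j
      simp [vecMulVec_apply]
      field_simp
      ring
    rw [key, det_smul, det_one_add_replicateCol_mul_replicateRow]
    have hdot : u ⬝ᵥ (-(x⁻¹ • u)) = -(x⁻¹ * ∑ i, u i * u i) := by
      simp only [dotProduct, Pi.neg_apply, Pi.smul_apply, smul_eq_mul, Finset.mul_sum,
        mul_neg, ← Finset.sum_neg_distrib]
      congr 1; ext i; ring
    rw [hdot]
    rw [Fintype.card_fin]
    field_simp
    ring
  · have : ({x : ℝ | x ≠ 0}) = ({0} : Set ℝ)ᶜ := by ext x; simp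
    rw [this]
    exact (Set.finite_singleton 0).infinite_compl

noncomputable def uvec (n : ℕ) (z1 z2 z3 : ℝ) : Fin (n + 1) → ℝ :=
  fun i => if i.val = 0 then Real.sqrt z1 else if i.val = n then -Real.sqrt z3
    else Real.sqrt z2

open Matrix in
private lemma Bmat_eq_vecMulVec (n : ℕ) (hn : 2 ≤ n) (z1 z2 z3 z4 : ℝ)
    (h1 : 0 ≤ z1) (h2 : 0 ≤ z2) (h3 : 0 ≤ z3)
    (h13 : Real.sqrt (z1 * z3) = 1 + z3 - z4 / 2)
    (h23 : Real.sqrt (z2 * z3) = 1 / 2 + z3 - z4 / 2) :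
    Bmat n z1 z2 z3 z4 = vecMulVec (uvec n z1 z2 z3) (uvec n z1 z2 z3) := by
  ext p q
  have hp := p.isLt
  have hq := q.isLt
  simp only [Bmat, uvec, vecMulVec_apply, Matrix.of_apply]
  have h0n : (0 : ℕ) ≠ n := by omega
  rcases Nat.eq_zero_or_pos p.val with hp0 | hp1
  · rcases Nat.eq_zero_or_pos q.val with hq0 | hq1
    · rw [if_pos ⟨hp0, hq0⟩, if_pos hp0, if_pos hq0, Real.mul_self_sqrt h1]
    · by_cases hqn : q.val = n
      · rw [if_neg (by omega), if_neg (by omega), if_pos (Or.inl ⟨hp0, hqn⟩),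
          if_pos hp0, if_neg (by omega), if_pos hqn, mul_neg, ← Real.sqrt_mul h1,
          h13]
        ring
      · rw [if_neg (by omega), if_pos (Or.inl ⟨hp0, by omega⟩), if_pos hp0,
          if_neg (by omega), if_neg hqn, Real.sqrt_mul h1]
  · by_cases hpn : p.val = n
    · rcases Nat.eq_zero_or_pos q.val with hq0 | hq1
      · rw [if_neg (by omega), if_neg (by omega), if_pos (Or.inr ⟨hpn, hq0⟩),
          if_neg (by omega), if_pos hpn, if_pos hq0, neg_mul, ← Real.sqrt_mul h3,
          mul_comm z3 z1, h13]
        ring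
      · by_cases hqn : q.val = n
        · rw [if_neg (by omega), if_neg (by omega), if_neg (by omega),
            if_neg (by omega), if_neg (by omega), if_pos ⟨hpn, hqn⟩,
            if_neg (by omega), if_pos hpn, if_neg (by omega), if_pos hqn,
            neg_mul_neg, ← Real.sqrt_mul h3, Real.sqrt_mul_self h3]
        · rw [if_neg (by omega), if_neg (by omega), if_neg (by omega),
            if_neg (by omega), if_pos (Or.inr ⟨hpn, by omega⟩),
            if_neg (by omega), if_pos hpn, if_neg (by omega), if_neg hqn,
            neg_mul, ← Real.sqrt_mul h3, mul_comm z3 z2, h23]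
          ring
    · rcases Nat.eq_zero_or_pos q.val with hq0 | hq1
      · rw [if_neg (by omega), if_pos (Or.inr ⟨by omega, by omega, hq0⟩),
          if_neg (by omega), if_neg hpn, if_pos hq0, Real.sqrt_mul h1, mul_comm]
      · by_cases hqn : q.val = n
        · rw [if_neg (by omega), if_neg (by omega), if_neg (by omega),
            if_neg (by omega), if_pos (Or.inl ⟨by omega, by omega, hqn⟩),
            if_neg (by omega), if_neg hpn, if_neg (by omega), if_pos hqn,
            mul_neg, ← Real.sqrt_mul h2, h23]
          ring
        · rw [if_neg (by omega), if_neg (by omega), if_neg (by omega),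
            if_pos ⟨by omega, by omega, by omega, by omega⟩,
            if_neg (by omega), if_neg hpn, if_neg (by omega), if_neg hqn,
            Real.mul_self_sqrt h2]

private lemma uvec_sum (n : ℕ) (hn : 2 ≤ n) (z1 z2 z3 : ℝ)
    (h1 : 0 ≤ z1) (h2 : 0 ≤ z2) (h3 : 0 ≤ z3) :
    ∑ i, uvec n z1 z2 z3 i * uvec n z1 z2 z3 i = z1 + ((n : ℝ) - 1) * z2 + z3 := by
  have key : ∀ i : Fin (n + 1), uvec n z1 z2 z3 i * uvec n z1 z2 z3 i =
      z2 + ((if i = (0 : Fin (n+1)) then z1 - z2 else 0) +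
        (if i = Fin.last n then z3 - z2 else 0)) := by
    intro i
    simp only [uvec]
    have e0 : (i = (0 : Fin (n+1))) ↔ i.val = 0 := by
      rw [Fin.ext_iff]; simp
    have en : (i = Fin.last n) ↔ i.val = n := by
      rw [Fin.ext_iff]; simp [Fin.last]
    by_cases hi0 : i.val = 0
    · rw [if_pos hi0, if_pos (e0.mpr hi0), if_neg (by rw [en]; omega),
        Real.mul_self_sqrt h1]; ring
    · by_cases hin : i.val = n
      · rw [if_neg hi0, if_pos hin, if_neg (by rw [e0]; omega), if_pos (en.mpr hin),
          neg_mul_neg, Real.mul_self_sqrt h3]; ring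
      · rw [if_neg hi0, if_neg hin, if_neg (by rw [e0]; omega),
          if_neg (by rw [en]; omega), Real.mul_self_sqrt h2]; ring
  rw [Finset.sum_congr rfl (fun i _ => key i)]
  rw [Finset.sum_add_distrib, Finset.sum_add_distrib, Finset.sum_const,
    Finset.sum_ite_eq' Finset.univ (0 : Fin (n+1)) (fun _ => z1 - z2),
    Finset.sum_ite_eq' Finset.univ (Fin.last n) (fun _ => z3 - z2)]
  simp only [Finset.mem_univ, if_pos, Finset.card_univ, Fintype.card_fin, nsmul_eq_mul]
  push_cast
  ring

set_option maxHeartbeats 1000000 in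
/-- With the dual variables `𝔷_1, 𝔷_2, 𝔷_3, 𝔷_4` defined piecewise in `γ ∈ (0, 1/2]` as
stated, the characteristic polynomial of the upper-left `(n+1) × (n+1)` block `B` of the dual
matrix `𝒵` is `x^{n+1} - Λ_n(γ) x^n`; in particular the only nonzero eigenvalue of `B` is
`Λ_n(γ)`. -/
theorem Bmat_charpoly (n : ℕ) (hn : 2 ≤ n) (γ : ℝ)
    (hγ1 : 0 < γ) (hγ2 : γ ≤ 1 / 2) :
    (∀ z1 z2 z3 z4 : ℝ, γ ≤ 1 / ((n : ℝ) + 1) →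
      z1 = 2 + 2 * γ + 1 / (2 * γ) →
      z2 = (1 + γ) ^ 2 / (2 * γ) →
      z3 = 1 / (2 * γ) →
      z4 = 0 →
      (Bmat n z1 z2 z3 z4).charpoly =
        X ^ (n + 1) -
          C ((((n : ℝ) + 1) * (1 + 2 * γ) + ((n : ℝ) + 3) * γ ^ 2) / (2 * γ)) * X ^ n) ∧
    (∀ z1 z2 z3 z4 : ℝ, 1 / ((n : ℝ) + 1) ≤ γ →
      z1 = (1 - (n : ℝ)) * (1 + 2 * γ) ^ 2 / (2 * (1 - 2 * (n : ℝ) * γ)) →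
      z2 = ((n : ℝ) - 2 * γ) ^ 2 / (2 * (1 - (n : ℝ)) * (1 - 2 * (n : ℝ) * γ)) →
      z3 = (1 - (n : ℝ)) / (2 * (1 - 2 * (n : ℝ) * γ)) →
      z4 = 1 + (1 - 2 * γ) / (1 - 2 * (n : ℝ) * γ) →
      (Bmat n z1 z2 z3 z4).charpoly =
        X ^ (n + 1) -
          C (((n : ℝ) ^ 2 + 2 * ((n : ℝ) - 1) - 4 * γ + 4 * (n : ℝ) * γ ^ 2) /
              (2 * (-1 + 2 * (n : ℝ) * γ))) * X ^ n) := by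
  have hnr : (2 : ℝ) ≤ (n : ℝ) := by exact_mod_cast hn
  constructor
  · intro z1 z2 z3 z4 _ hz1 hz2 hz3 hz4
    subst hz1 hz2 hz3 hz4
    have h1 : (0:ℝ) ≤ 2 + 2 * γ + 1 / (2 * γ) := by positivity
    have h2 : (0:ℝ) ≤ (1 + γ) ^ 2 / (2 * γ) := by positivity
    have h3 : (0:ℝ) ≤ 1 / (2 * γ) := by positivity
    have h13 : Real.sqrt ((2 + 2 * γ + 1 / (2 * γ)) * (1 / (2 * γ))) =
        1 + 1 / (2 * γ) - 0 / 2 := by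
      rw [show (2 + 2 * γ + 1 / (2 * γ)) * (1 / (2 * γ)) =
        (1 + 1 / (2 * γ) - 0 / 2) ^ 2 by field_simp; ring]
      exact Real.sqrt_sq (by simp only [zero_div, sub_zero]; positivity)
    have h23 : Real.sqrt (((1 + γ) ^ 2 / (2 * γ)) * (1 / (2 * γ))) =
        1 / 2 + 1 / (2 * γ) - 0 / 2 := by
      rw [show ((1 + γ) ^ 2 / (2 * γ)) * (1 / (2 * γ)) =
        (1 / 2 + 1 / (2 * γ) - 0 / 2) ^ 2 by field_simp; ring]
      exact Real.sqrt_sq (by simp only [zero_div, sub_zero]; positivity)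
    rw [Bmat_eq_vecMulVec n hn _ _ _ _ h1 h2 h3 h13 h23, rank_one_charpoly,
      uvec_sum n hn _ _ _ h1 h2 h3]
    rw [show (2 + 2 * γ + 1 / (2 * γ)) + ((n : ℝ) - 1) * ((1 + γ) ^ 2 / (2 * γ)) +
        1 / (2 * γ) =
        (((n : ℝ) + 1) * (1 + 2 * γ) + ((n : ℝ) + 3) * γ ^ 2) / (2 * γ) by
      field_simp; ring]
  · intro z1 z2 z3 z4 hle hz1 hz2 hz3 hz4
    subst hz1 hz2 hz3 hz4
    have hone : (1 : ℝ) ≤ ((n : ℝ) + 1) * γ := by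
      rw [div_le_iff₀ (by positivity)] at hle; linarith
    have hd : 0 < 2 * (n : ℝ) * γ - 1 := by nlinarith
    have hne : (1 : ℝ) - 2 * (n : ℝ) * γ ≠ 0 := by nlinarith
    have hn1 : (1 : ℝ) - (n : ℝ) ≠ 0 := by nlinarith
    have h1 : 0 ≤ (1 - (n : ℝ)) * (1 + 2 * γ) ^ 2 / (2 * (1 - 2 * (n : ℝ) * γ)) :=
      div_nonneg_iff.mpr (Or.inr ⟨by nlinarith, by nlinarith⟩)
    have h2 : 0 ≤ ((n : ℝ) - 2 * γ) ^ 2 / (2 * (1 - (n : ℝ)) * (1 - 2 * (n : ℝ) * γ)) :=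
      div_nonneg (sq_nonneg _) (by nlinarith)
    have h3 : 0 ≤ (1 - (n : ℝ)) / (2 * (1 - 2 * (n : ℝ) * γ)) :=
      div_nonneg_iff.mpr (Or.inr ⟨by nlinarith, by nlinarith⟩)
    have h13 : Real.sqrt (((1 - (n : ℝ)) * (1 + 2 * γ) ^ 2 / (2 * (1 - 2 * (n : ℝ) * γ))) *
        ((1 - (n : ℝ)) / (2 * (1 - 2 * (n : ℝ) * γ)))) =
        1 + (1 - (n : ℝ)) / (2 * (1 - 2 * (n : ℝ) * γ)) -
          (1 + (1 - 2 * γ) / (1 - 2 * (n : ℝ) * γ)) / 2 := by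
      rw [show ((1 - (n : ℝ)) * (1 + 2 * γ) ^ 2 / (2 * (1 - 2 * (n : ℝ) * γ))) *
          ((1 - (n : ℝ)) / (2 * (1 - 2 * (n : ℝ) * γ))) =
          (1 + (1 - (n : ℝ)) / (2 * (1 - 2 * (n : ℝ) * γ)) -
            (1 + (1 - 2 * γ) / (1 - 2 * (n : ℝ) * γ)) / 2) ^ 2 by have h' : (1 : ℝ) - (n : ℝ) * 2 * γ ≠ 0 := (by linarith); field_simp; ring]
      apply Real.sqrt_sq
      rw [show 1 + (1 - (n : ℝ)) / (2 * (1 - 2 * (n : ℝ) * γ)) -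
          (1 + (1 - 2 * γ) / (1 - 2 * (n : ℝ) * γ)) / 2 =
          ((n : ℝ) - 1) * (1 + 2 * γ) / (2 * (2 * (n : ℝ) * γ - 1)) by
          have h' : (1 : ℝ) - (n : ℝ) * 2 * γ ≠ 0 := (by linarith); have h'' : (n : ℝ) * 2 * γ - 1 ≠ 0 := (by linarith); field_simp; ring]
      apply div_nonneg <;> nlinarith
    have h23 : Real.sqrt ((((n : ℝ) - 2 * γ) ^ 2 / (2 * (1 - (n : ℝ)) * (1 - 2 * (n : ℝ) * γ))) *
        ((1 - (n : ℝ)) / (2 * (1 - 2 * (n : ℝ) * γ)))) =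
        1 / 2 + (1 - (n : ℝ)) / (2 * (1 - 2 * (n : ℝ) * γ)) -
          (1 + (1 - 2 * γ) / (1 - 2 * (n : ℝ) * γ)) / 2 := by
      rw [show (((n : ℝ) - 2 * γ) ^ 2 / (2 * (1 - (n : ℝ)) * (1 - 2 * (n : ℝ) * γ))) *
          ((1 - (n : ℝ)) / (2 * (1 - 2 * (n : ℝ) * γ))) =
          (1 / 2 + (1 - (n : ℝ)) / (2 * (1 - 2 * (n : ℝ) * γ)) -
            (1 + (1 - 2 * γ) / (1 - 2 * (n : ℝ) * γ)) / 2) ^ 2 by have h' : (1 : ℝ) - (n : ℝ) * 2 * γ ≠ 0 := (by linarith); field_simp; ring]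
      apply Real.sqrt_sq
      rw [show 1 / 2 + (1 - (n : ℝ)) / (2 * (1 - 2 * (n : ℝ) * γ)) -
          (1 + (1 - 2 * γ) / (1 - 2 * (n : ℝ) * γ)) / 2 =
          ((n : ℝ) - 2 * γ) / (2 * (2 * (n : ℝ) * γ - 1)) by
          have h' : (1 : ℝ) - (n : ℝ) * 2 * γ ≠ 0 := (by linarith); have h'' : (n : ℝ) * 2 * γ - 1 ≠ 0 := (by linarith); field_simp; ring]
      apply div_nonneg <;> nlinarith
    rw [Bmat_eq_vecMulVec n hn _ _ _ _ h1 h2 h3 h13 h23, rank_one_charpoly,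
      uvec_sum n hn _ _ _ h1 h2 h3]
    rw [show (1 - (n : ℝ)) * (1 + 2 * γ) ^ 2 / (2 * (1 - 2 * (n : ℝ) * γ)) +
        ((n : ℝ) - 1) * (((n : ℝ) - 2 * γ) ^ 2 / (2 * (1 - (n : ℝ)) * (1 - 2 * (n : ℝ) * γ))) +
        (1 - (n : ℝ)) / (2 * (1 - 2 * (n : ℝ) * γ)) =
        ((n : ℝ) ^ 2 + 2 * ((n : ℝ) - 1) - 4 * γ + 4 * (n : ℝ) * γ ^ 2) /
          (2 * (-1 + 2 * (n : ℝ) * γ)) by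
      have hne' : (-1 : ℝ) + 2 * (n : ℝ) * γ ≠ 0 := by nlinarith
      have h' : (1 : ℝ) - (n : ℝ) * 2 * γ ≠ 0 := by linarith
      have h'' : (-1 : ℝ) + (n : ℝ) * 2 * γ ≠ 0 := by linarith
      field_simp; ring]
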